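/- Suppose Φ : ℕ → ℝ satisfies Φ(0) = 0 and Φ(n) > 0 for all n ≥ 1, and define q(n:m) := Φ(n:m)/Φ(n) where Φ(n:m) = C(n,m) ∑_{j=0}^m (-1)^{j+1} C(m,j) Φ(n-m+j). Then for all 1 ≤ m ≤ n, q(n:m) = ((m+1)/(n+1)) q(n+1:m+1) + ((n+1-m)/(n+1)) q(n+1:m) + (1/(n+1)) q(n+1:1) q(n:m). -/

import Mathlib

/-- The binomial moments `Φ(n:m)` associated with a sequence `Φ`. -/
noncomputable def phiNM (Φ : ℕ → ℝ) (n m : ℕ) : ℝ :=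
  (n.choose m : ℝ) *
    ∑ j ∈ Finset.range (m + 1), (-1 : ℝ) ^ (j + 1) * (m.choose j : ℝ) * Φ (n - m + j)

/-- The decrement matrix `q(n:m) = Φ(n:m)/Φ(n)`. -/
noncomputable def decMatrix (Φ : ℕ → ℝ) (n m : ℕ) : ℝ := phiNM Φ n m / Φ n

noncomputable def Dalt (Φ : ℕ → ℝ) (m k : ℕ) : ℝ :=
  ∑ j ∈ Finset.range (m + 1), (-1 : ℝ) ^ (j + 1) * (m.choose j : ℝ) * Φ (k + j)

lemma Dalt_step (Φ : ℕ → ℝ) (m k : ℕ) :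
    Dalt Φ (m + 1) k = Dalt Φ m k - Dalt Φ m (k + 1) := by
  unfold Dalt
  rw [Finset.sum_range_succ' (fun j => (-1 : ℝ) ^ (j + 1) * ((m+1).choose j : ℝ) * Φ (k + j))]
  have pascal : ∀ j : ℕ, ((m+1).choose (j+1) : ℝ) = (m.choose j : ℝ) + (m.choose (j+1) : ℝ) := by
    intro j
    rw [Nat.choose_succ_succ]
    push_cast; ring
  have h1 : ∑ j ∈ Finset.range (m + 1),
      (-1 : ℝ) ^ (j + 1 + 1) * ((m+1).choose (j+1) : ℝ) * Φ (k + (j + 1))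
      = (∑ j ∈ Finset.range (m + 1), (-1 : ℝ) ^ (j + 1 + 1) * (m.choose j : ℝ) * Φ (k + 1 + j))
      + ∑ j ∈ Finset.range (m + 1), (-1 : ℝ) ^ (j + 1 + 1) * (m.choose (j+1) : ℝ) * Φ (k + (j + 1)) := by
    rw [← Finset.sum_add_distrib]
    apply Finset.sum_congr rfl
    intro j _
    rw [pascal j]
    have : k + (j + 1) = k + 1 + j := by omega
    rw [this]; ring
  rw [h1]
  have h2 : ∑ j ∈ Finset.range (m + 1), (-1 : ℝ) ^ (j + 1 + 1) * (m.choose (j+1) : ℝ) * Φ (k + (j + 1))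
      = (∑ j ∈ Finset.range (m + 2), (-1 : ℝ) ^ (j + 1) * (m.choose j : ℝ) * Φ (k + j))
        - (-1 : ℝ) ^ (0 + 1) * (m.choose 0 : ℝ) * Φ (k + 0) := by
    rw [Finset.sum_range_succ' (fun j => (-1 : ℝ) ^ (j + 1) * (m.choose j : ℝ) * Φ (k + j))]
    ring
  have h4 : ∑ j ∈ Finset.range (m + 2), (-1 : ℝ) ^ (j + 1) * (m.choose j : ℝ) * Φ (k + j)
      = ∑ j ∈ Finset.range (m + 1), (-1 : ℝ) ^ (j + 1) * (m.choose j : ℝ) * Φ (k + j) := by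
    rw [Finset.sum_range_succ]
    simp [Nat.choose_eq_zero_of_lt]
  rw [h2, h4]
  have h3 : ∑ j ∈ Finset.range (m + 1), (-1 : ℝ) ^ (j + 1 + 1) * (m.choose j : ℝ) * Φ (k + 1 + j)
      = - ∑ j ∈ Finset.range (m + 1), (-1 : ℝ) ^ (j + 1) * (m.choose j : ℝ) * Φ (k + 1 + j) := by
    rw [← Finset.sum_neg_distrib]
    apply Finset.sum_congr rfl
    intro j _
    ring
  rw [h3]
  simp
  ring

lemma phiNM_eq_Dalt (Φ : ℕ → ℝ) (n m : ℕ) :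
    phiNM Φ n m = (n.choose m : ℝ) * Dalt Φ m (n - m) := rfl

lemma key (Φ : ℕ → ℝ) {n m : ℕ} (h2 : m ≤ n) :
    ((n : ℝ) + 1) * phiNM Φ n m
      = ((m : ℝ) + 1) * phiNM Φ (n + 1) (m + 1) + ((n : ℝ) + 1 - (m : ℝ)) * phiNM Φ (n + 1) m := by
  rw [phiNM_eq_Dalt, phiNM_eq_Dalt, phiNM_eq_Dalt]
  have e1 : n + 1 - (m + 1) = n - m := by omega
  have e2 : n + 1 - m = (n - m) + 1 := by omega
  rw [e1, e2, Dalt_step]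
  have c1 : ((m : ℝ) + 1) * ((n+1).choose (m+1) : ℝ) = ((n : ℝ) + 1) * (n.choose m : ℝ) := by
    have := Nat.add_one_mul_choose_eq n m
    have : ((n+1) * n.choose m : ℕ) = ((n+1).choose (m+1) * (m+1) : ℕ) := this
    have := congrArg (fun x : ℕ => (x : ℝ)) this
    push_cast at this
    linarith
  have c2 : ((n : ℝ) + 1 - (m : ℝ)) * ((n+1).choose m : ℝ) = ((n : ℝ) + 1) * (n.choose m : ℝ) := by
    have h := Nat.choose_succ_right_eq (n+1) m
    -- (n+1).choose (m+1) * (m+1) = (n+1).choose m * (n+1-m)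
    have hcast := congrArg (fun x : ℕ => (x : ℝ)) h
    push_cast [Nat.cast_sub (by omega : m ≤ n + 1)] at hcast
    nlinarith [c1, hcast]
  linear_combination (-(Dalt Φ m (n - m) - Dalt Φ m (n - m + 1))) * c1 + (-(Dalt Φ m (n - m + 1))) * c2

lemma phiNM_one (Φ : ℕ → ℝ) (n : ℕ) :
    phiNM Φ (n + 1) 1 = ((n : ℝ) + 1) * (Φ (n + 1) - Φ n) := by
  unfold phiNM
  rw [Finset.sum_range_succ, Finset.sum_range_one]
  have h : n + 1 - 1 = n := rfl
  rw [h, Nat.choose_one_right]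
  simp only [Nat.choose_self, Nat.choose_zero_right, Nat.cast_one, Nat.cast_add]
  ring

theorem stmt2 (Φ : ℕ → ℝ) (hΦ0 : Φ 0 = 0) (hΦpos : ∀ n : ℕ, 1 ≤ n → 0 < Φ n)
    (n m : ℕ) (h1 : 1 ≤ m) (h2 : m ≤ n) :
    decMatrix Φ n m
      = ((m : ℝ) + 1) / ((n : ℝ) + 1) * decMatrix Φ (n + 1) (m + 1)
      + ((n : ℝ) + 1 - (m : ℝ)) / ((n : ℝ) + 1) * decMatrix Φ (n + 1) m
      + 1 / ((n : ℝ) + 1) * decMatrix Φ (n + 1) 1 * decMatrix Φ n m := by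
  have ha : Φ n ≠ 0 := (hΦpos n (le_trans h1 h2)).ne'
  have hb : Φ (n + 1) ≠ 0 := (hΦpos (n+1) (by omega)).ne'
  have hn1 : ((n : ℝ) + 1) ≠ 0 := by positivity
  have hk := key Φ h2
  unfold decMatrix
  rw [phiNM_one]
  field_simp
  linear_combination (Φ n) * hk
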